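/- Let L = I − W be the directed Laplacian of a strongly connected graph with random walk matrix W and mixing time t_mix. Then √t_mix ≤ 16 ||L†||₁, where ||L†||₁ is the ℓ₁→ℓ₁ operator norm of the pseudoinverse. -/

import Mathlib

open Matrix Finset

/-- The lazy random walk matrix `(I + W)/2`. -/
noncomputable def lazyWalk {n : ℕ} (W : Matrix (Fin n) (Fin n) ℝ) :
    Matrix (Fin n) (Fin n) ℝ :=
  (1 / 2 : ℝ) • ((1 : Matrix (Fin n) (Fin n) ℝ) + W)

/-- `B` is the Moore–Penrose pseudoinverse of `A` (the four Penrose conditions). -/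
def IsMoorePenrose {m : Type*} [Fintype m] [DecidableEq m]
    (A B : Matrix m m ℝ) : Prop :=
  A * B * A = A ∧ B * A * B = B ∧ (A * B)ᵀ = A * B ∧ (B * A)ᵀ = B * A

/-- ℓ¹→ℓ¹ operator bound via column sums. -/
lemma l1_op_bound {n : ℕ} (M : Matrix (Fin n) (Fin n) ℝ) (x : Fin n → ℝ) (B : ℝ)
    (hB : ∀ j, ∑ i, |M i j| ≤ B) :
    ∑ i, |M.mulVec x i| ≤ B * ∑ j, |x j| := by
  have h1 : ∀ i : Fin n, |M.mulVec x i| ≤ ∑ j, |M i j| * |x j| := by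
    intro i
    calc |M.mulVec x i| = |∑ j, M i j * x j| := by
          simp [Matrix.mulVec, dotProduct]
      _ ≤ ∑ j, |M i j * x j| := Finset.abs_sum_le_sum_abs _ _
      _ = ∑ j, |M i j| * |x j| := by simp [abs_mul]
  calc ∑ i, |M.mulVec x i| ≤ ∑ i, ∑ j, |M i j| * |x j| :=
        Finset.sum_le_sum fun i _ => h1 i
    _ = ∑ j, (∑ i, |M i j|) * |x j| := by
        rw [Finset.sum_comm]
        exact Finset.sum_congr rfl fun j _ => (Finset.sum_mul _ _ _).symm
    _ ≤ ∑ j, B * |x j| := Finset.sum_le_sum fun j _ =>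
        mul_le_mul_of_nonneg_right (hB j) (abs_nonneg _)
    _ = B * ∑ j, |x j| := (Finset.mul_sum _ _ _).symm

lemma sum_mulVec_distrib {n : ℕ} (s : Finset ℕ) (f : ℕ → Matrix (Fin n) (Fin n) ℝ)
    (x : Fin n → ℝ) :
    (∑ i ∈ s, f i).mulVec x = ∑ i ∈ s, (f i).mulVec x := by
  induction s using Finset.cons_induction with
  | empty => simp [Matrix.zero_mulVec]
  | cons a s ha ih => rw [Finset.sum_cons, Finset.sum_cons, Matrix.add_mulVec, ih]

lemma rel1 (m : ℕ) : (2*m+1).choose m * (m+1) = (2*m).choose m * (2*m+1) := by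
  have h := Nat.add_one_mul_choose_eq (2*m) m
  have hsymm : (2*m+1).choose m = (2*m+1).choose (m+1) := by
    rw [← Nat.choose_symm (show m+1 ≤ 2*m+1 by omega)]
    congr 1
    omega
  rw [hsymm]
  rw [← h]
  ring

lemma rel2 (m : ℕ) : (2*m+2).choose (m+1) = 2 * ((2*m+1).choose m) := by
  have h : (2*m+1+1).choose (m+1) = (2*m+1).choose m + (2*m+1).choose (m+1) :=
    Nat.choose_succ_succ _ _
  have hsymm : (2*m+1).choose m = (2*m+1).choose (m+1) := by
    rw [← Nat.choose_symm (show m+1 ≤ 2*m+1 by omega)]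
    congr 1
    omega
  have h2 : (2*m+2) = (2*m+1+1) := by omega
  rw [h2, h, ← hsymm]
  ring

lemma evenToOdd {m : ℕ} (hE : (2*m).choose m ^ 2 * (6*m+2) ≤ 2 * 16^m) :
    (2*m+1).choose m ^ 2 * (6*m+8) ≤ 8 * 16^m := by
  set a := (2*m).choose m with ha
  set b := (2*m+1).choose m with hb
  have hr : b * (m+1) = a * (2*m+1) := rel1 m
  have hsq : b^2 * (m+1)^2 = a^2 * (2*m+1)^2 := by
    calc b^2*(m+1)^2 = (b*(m+1))^2 := by ring
      _ = (a*(2*m+1))^2 := by rw [hr]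
      _ = a^2*(2*m+1)^2 := by ring
  have hpoly : (2*m+1)^2*(6*m+8) ≤ (6*m+2)*(4*(m+1)^2) := by nlinarith
  have key : (b^2*(6*m+8)) * (m+1)^2 ≤ (8*16^m) * (m+1)^2 := by
    calc (b^2*(6*m+8))*(m+1)^2 = (b^2*(m+1)^2)*(6*m+8) := by ring
      _ = a^2*((2*m+1)^2*(6*m+8)) := by rw [hsq]; ring
      _ ≤ a^2*((6*m+2)*(4*(m+1)^2)) := Nat.mul_le_mul (le_refl _) hpoly
      _ = (a^2*(6*m+2))*(4*(m+1)^2) := by ring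
      _ ≤ (2*16^m)*(4*(m+1)^2) := Nat.mul_le_mul hE (le_refl _)
      _ = (8*16^m)*(m+1)^2 := by ring
  exact le_of_mul_le_mul_right key (by positivity)

lemma oddToEven {m : ℕ} (hO : (2*m+1).choose m ^ 2 * (6*m+8) ≤ 8 * 16^m) :
    (2*(m+1)).choose (m+1) ^ 2 * (6*(m+1)+2) ≤ 2 * 16^(m+1) := by
  have h2 : (2*(m+1)) = 2*m+2 := by ring
  rw [h2, rel2 m]
  calc (2 * (2*m+1).choose m)^2 * (6*(m+1)+2)
      = 4 * ((2*m+1).choose m ^ 2 * (6*m+8)) := by ring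
    _ ≤ 4 * (8 * 16^m) := Nat.mul_le_mul (le_refl _) hO
    _ = 2 * 16^(m+1) := by ring

lemma EO : ∀ m : ℕ, (2*m).choose m ^ 2 * (6*m+2) ≤ 2 * 16^m ∧
    (2*m+1).choose m ^ 2 * (6*m+8) ≤ 8 * 16^m := by
  intro m
  induction m with
  | zero => refine ⟨by norm_num, by norm_num⟩
  | succ m ih =>
    have hE := oddToEven ih.2
    exact ⟨hE, evenToOdd hE⟩

lemma choose_sq_bound (T : ℕ) : T.choose (T/2) ^ 2 * (3*T+2) ≤ 2 * 4^T := by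
  rcases Nat.even_or_odd T with ⟨m, hm⟩ | ⟨m, hm⟩
  · subst hm
    have h := (EO m).1
    have h1 : (m+m)/2 = m := by omega
    have h2 : 3*(m+m)+2 = 6*m+2 := by ring
    have h3 : (4:ℕ)^(m+m) = 16^m := by
      rw [pow_add, ← mul_pow]; norm_num
    rw [h1, h2, h3]
    have h4 : m + m = 2*m := by ring
    rw [h4]
    exact h
  · subst hm
    have h := (EO m).2
    have h1 : (2*m+1)/2 = m := by omega
    have h2 : 3*(2*m+1)+2 = 6*m+5 := by ring
    have h3 : 2*(4:ℕ)^(2*m+1) = 8*16^m := by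
      rw [pow_succ, pow_mul]
      norm_num
      ring
    rw [h1, h2, h3]
    calc (2*m+1).choose m ^ 2 * (6*m+5) ≤ (2*m+1).choose m ^ 2 * (6*m+8) :=
          Nat.mul_le_mul (le_refl _) (by omega)
      _ ≤ 8 * 16^m := h

lemma choose_le_succ_of {T k : ℕ} (h : 2*(k+1) ≤ T+1) : T.choose k ≤ T.choose (k+1) := by
  have hid := Nat.choose_succ_right_eq T k
  have h2 : T.choose k * (k+1) ≤ T.choose k * (T - k) :=
    Nat.mul_le_mul (le_refl _) (by omega)
  rw [← hid] at h2
  exact le_of_mul_le_mul_right h2 (by omega)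

lemma choose_succ_le_of {T k : ℕ} (h : T+1 ≤ 2*(k+1)) : T.choose (k+1) ≤ T.choose k := by
  have hid := Nat.choose_succ_right_eq T k
  have h2 : T.choose (k+1) * (k+1) ≤ T.choose k * (k+1) := by
    rw [hid]
    exact Nat.mul_le_mul (le_refl _) (by omega)
  exact le_of_mul_le_mul_right h2 (by omega)

noncomputable def cprev (T : ℕ) : ℕ → ℝ := fun i => if i = 0 then 0 else (T.choose (i-1) : ℝ)

noncomputable def dcoef (T : ℕ) : ℕ → ℝ := fun i => (T.choose i : ℝ) - cprev T i

lemma dcoef_telescope (T : ℕ) : ∀ k, ∑ i ∈ Finset.range k, dcoef T i = cprev T k := by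
  intro k
  induction k with
  | zero => simp [cprev]
  | succ k ih =>
    rw [Finset.sum_range_succ, ih]
    simp [dcoef, cprev]

lemma dcoef_Ico (T : ℕ) {a b : ℕ} (hab : a ≤ b) :
    ∑ i ∈ Finset.Ico a b, dcoef T i = cprev T b - cprev T a := by
  rw [Finset.sum_Ico_eq_sub _ hab, dcoef_telescope, dcoef_telescope]

lemma dcoef_nonneg (T : ℕ) : ∀ i ∈ Finset.range (T/2 + 1), 0 ≤ dcoef T i := by
  intro i hi
  rw [Finset.mem_range] at hi
  match i with
  | 0 => simp [dcoef, cprev]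
  | (k+1) =>
    simp only [dcoef, cprev, if_neg (Nat.succ_ne_zero k), Nat.add_sub_cancel, sub_nonneg]
    exact_mod_cast choose_le_succ_of (by omega)

lemma dcoef_nonpos (T : ℕ) : ∀ i ∈ Finset.Ico (T/2 + 1) (T+2), dcoef T i ≤ 0 := by
  intro i hi
  rw [Finset.mem_Ico] at hi
  match i with
  | 0 => omega
  | (k+1) =>
    simp only [dcoef, cprev, if_neg (Nat.succ_ne_zero k), Nat.add_sub_cancel, sub_nonpos]
    exact_mod_cast choose_succ_le_of (by omega)

lemma abs_dcoef_sum (T : ℕ) :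
    ∑ i ∈ Finset.range (T+2), |dcoef T i| = 2 * (T.choose (T/2) : ℝ) := by
  have hle : T/2 + 1 ≤ T + 2 := by omega
  rw [← Finset.sum_range_add_sum_Ico _ hle]
  have h1 : ∑ i ∈ Finset.range (T/2+1), |dcoef T i| = ∑ i ∈ Finset.range (T/2+1), dcoef T i :=
    Finset.sum_congr rfl fun i hi => abs_of_nonneg (dcoef_nonneg T i hi)
  have h2 : ∑ i ∈ Finset.Ico (T/2+1) (T+2), |dcoef T i|
      = -∑ i ∈ Finset.Ico (T/2+1) (T+2), dcoef T i := by
    rw [← Finset.sum_neg_distrib]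
    exact Finset.sum_congr rfl fun i hi => abs_of_nonpos (dcoef_nonpos T i hi)
  rw [h1, h2, dcoef_telescope, dcoef_Ico T hle]
  have hc1 : cprev T (T/2+1) = (T.choose (T/2) : ℝ) := by simp [cprev]
  have hc2 : cprev T (T+2) = 0 := by
    simp only [cprev, if_neg (by omega : T + 2 ≠ 0), Nat.add_sub_cancel]
    norm_cast
    exact Nat.choose_eq_zero_of_lt (by omega)
  rw [hc1, hc2]
  ring

lemma lazy_pow_mul_L {n : ℕ} (W : Matrix (Fin n) (Fin n) ℝ) (T : ℕ) :
    (lazyWalk W) ^ T * ((1 : Matrix (Fin n) (Fin n) ℝ) - W)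
      = ((1:ℝ)/2) ^ T • ∑ i ∈ Finset.range (T+2), dcoef T i • W ^ i := by
  have e1 : lazyWalk W ^ T = ((1:ℝ)/2)^T • ((1 : Matrix (Fin n) (Fin n) ℝ) + W)^T := by
    rw [lazyWalk, smul_pow]
  have e2 : ((1 : Matrix (Fin n) (Fin n) ℝ) + W)^T
      = ∑ i ∈ Finset.range (T+1), (T.choose i : ℝ) • W ^ i := by
    rw [add_comm (1 : Matrix (Fin n) (Fin n) ℝ) W, (Commute.one_right W).add_pow]
    refine Finset.sum_congr rfl fun i _ => ?_
    rw [one_pow, mul_one]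
    rw [Nat.cast_smul_eq_nsmul ℝ (T.choose i) (W ^ i), nsmul_eq_mul]
    exact ((Nat.cast_commute (T.choose i) (W ^ i)).eq).symm
  have e3 : ((1 : Matrix (Fin n) (Fin n) ℝ) + W)^T * ((1 : Matrix (Fin n) (Fin n) ℝ) - W)
      = ∑ i ∈ Finset.range (T+2), dcoef T i • W ^ i := by
    rw [e2, Finset.sum_mul]
    have e4 : ∀ i, ((T.choose i : ℝ) • W ^ i) * ((1 : Matrix (Fin n) (Fin n) ℝ) - W)
        = (T.choose i : ℝ) • W ^ i - (T.choose i : ℝ) • W ^ (i+1) := by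
      intro i
      rw [smul_mul_assoc, mul_sub, mul_one, ← pow_succ, smul_sub]
    rw [Finset.sum_congr rfl fun i _ => e4 i, Finset.sum_sub_distrib]
    have e5 : ∑ i ∈ Finset.range (T+1), (T.choose i : ℝ) • W ^ i
        = ∑ i ∈ Finset.range (T+2), (T.choose i : ℝ) • W ^ i := by
      rw [Finset.sum_range_succ (fun i => (T.choose i : ℝ) • W ^ i) (T+1)]
      rw [Nat.choose_eq_zero_of_lt (by omega : T < T+1), Nat.cast_zero, zero_smul, add_zero]
    have e6 : ∑ i ∈ Finset.range (T+1), (T.choose i : ℝ) • W ^ (i+1)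
        = ∑ i ∈ Finset.range (T+2), cprev T i • W ^ i := by
      rw [Finset.sum_range_succ' (fun i => cprev T i • W ^ i) (T+1)]
      simp [cprev]
    rw [e5, e6, ← Finset.sum_sub_distrib]
    exact Finset.sum_congr rfl fun i _ => (sub_smul _ _ _).symm
  rw [e1, smul_mul_assoc, e3]


set_option maxHeartbeats 1000000 in
/-- For `L = I - W` the directed Laplacian of a strongly connected graph with mixing
time `t_mix`, one has `√t_mix ≤ 16 ‖L†‖₁`, where `‖·‖₁` is the `ℓ₁ → ℓ₁` operator norm
(the maximum column `ℓ₁` norm). -/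
theorem sqrt_tmix_le_pinv_norm {n : ℕ} (hn : 0 < n)
    (W : Matrix (Fin n) (Fin n) ℝ)
    (hWnn : ∀ i j, 0 ≤ W i j) (hWcol : ∀ j, ∑ i, W i j = 1)
    (hirr : ∀ i j : Fin n, ∃ k : ℕ, 0 < (W ^ k) i j)
    (s : Fin n → ℝ) (hs : ∀ i, 0 ≤ s i) (hs1 : ∑ i, s i = 1)
    (hstat : W.mulVec s = s)
    (tmix : ℕ)
    (hmix : ∀ p : Fin n → ℝ, (∀ i, 0 ≤ p i) → ∑ i, p i = 1 →
      ∑ i, |((lazyWalk W ^ tmix).mulVec p) i - s i| ≤ 1 / 2)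
    (hleast : ∀ t : ℕ,
      (∀ p : Fin n → ℝ, (∀ i, 0 ≤ p i) → ∑ i, p i = 1 →
        ∑ i, |((lazyWalk W ^ t).mulVec p) i - s i| ≤ 1 / 2) → tmix ≤ t)
    (Lp : Matrix (Fin n) (Fin n) ℝ)
    (hLp : IsMoorePenrose ((1 : Matrix (Fin n) (Fin n) ℝ) - W) Lp) :
    Real.sqrt tmix ≤ 16 * ⨆ j : Fin n, ∑ i, |Lp i j| := by
  classical
  obtain ⟨h1, h2, h3, h4⟩ := hLp
  set L : Matrix (Fin n) (Fin n) ℝ := (1 : Matrix (Fin n) (Fin n) ℝ) - W with hLdef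
  set K := ⨆ j : Fin n, ∑ i, |Lp i j| with hKdef
  have hbdd : BddAbove (Set.range fun j : Fin n => ∑ i, |Lp i j|) :=
    (Set.finite_range _).bddAbove
  have hKcol : ∀ j, ∑ i, |Lp i j| ≤ K := fun j => le_ciSup hbdd j
  have i0 : Fin n := ⟨0, hn⟩
  have hK0 : 0 ≤ K := le_trans (Finset.sum_nonneg fun i _ => abs_nonneg _) (hKcol i0)
  rcases Nat.eq_zero_or_pos tmix with h0 | hpos
  · rw [h0]
    simp only [Nat.cast_zero, Real.sqrt_zero]
    linarith
  set T := tmix - 1 with hTdef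
  have htmix : tmix = T + 1 := by omega
  -- powers of W are entrywise nonnegative and column stochastic
  have hWpownn : ∀ k : ℕ, ∀ i j, 0 ≤ (W ^ k) i j := by
    intro k
    induction k with
    | zero =>
      intro i j
      rw [pow_zero]
      by_cases h : i = j <;> simp [Matrix.one_apply, h]
    | succ k ih =>
      intro i j
      rw [pow_succ, Matrix.mul_apply]
      exact Finset.sum_nonneg fun m _ => mul_nonneg (ih i m) (hWnn m j)
  have hWpowcol : ∀ k : ℕ, ∀ j, ∑ i, (W ^ k) i j = 1 := by
    intro k
    induction k with
    | zero =>
      intro j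
      simp [Matrix.one_apply]
    | succ k ih =>
      intro j
      calc ∑ i, (W ^ (k+1)) i j = ∑ i, ∑ m, (W ^ k) i m * W m j := by
            simp [pow_succ, Matrix.mul_apply]
        _ = ∑ m, (∑ i, (W ^ k) i m) * W m j := by
            rw [Finset.sum_comm]
            exact Finset.sum_congr rfl fun m _ => (Finset.sum_mul _ _ _).symm
        _ = ∑ m, W m j := Finset.sum_congr rfl fun m _ => by rw [ih m, one_mul]
        _ = 1 := hWcol j
  have hcontr : ∀ k : ℕ, ∀ x : Fin n → ℝ, ∑ i, |(W ^ k).mulVec x i| ≤ ∑ j, |x j| := by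
    intro k x
    have h := l1_op_bound (W ^ k) x 1 (fun j => le_of_eq (by
      rw [Finset.sum_congr rfl fun i _ => abs_of_nonneg (hWpownn k i j)]
      exact hWpowcol k j))
    linarith
  -- extract a bad distribution at time T
  have hnot : ¬ ∀ p : Fin n → ℝ, (∀ i, 0 ≤ p i) → ∑ i, p i = 1 →
      ∑ i, |((lazyWalk W ^ T).mulVec p) i - s i| ≤ 1 / 2 := by
    intro h
    have := hleast T h
    omega
  push_neg at hnot
  obtain ⟨p, hp0, hp1, hgt⟩ := hnot
  set v : Fin n → ℝ := fun i => p i - s i with hv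
  set zp : Fin n → ℝ := Lp.mulVec v with hzp
  set q : Fin n → ℝ := v - (L * Lp).mulVec v with hqdef
  -- q is a fixed vector of Wᵀ
  have hLtL : Lᵀ * (L * Lp) = Lᵀ := by
    have ht := congrArg Matrix.transpose h1
    rw [Matrix.transpose_mul] at ht
    rw [h3] at ht
    exact ht
  have hqfix : Wᵀ.mulVec q = q := by
    have h5 : Lᵀ.mulVec q = 0 := by
      rw [hqdef, Matrix.mulVec_sub, Matrix.mulVec_mulVec, hLtL, sub_self]
    have h6 : Lᵀ.mulVec q = q - Wᵀ.mulVec q := by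
      rw [hLdef, Matrix.transpose_sub, Matrix.transpose_one, Matrix.sub_mulVec,
        Matrix.one_mulVec]
    rw [h6] at h5
    have := sub_eq_zero.mp h5
    exact this.symm
  have hqW : ∀ i, q i = ∑ j, W j i * q j := by
    intro i
    conv_lhs => rw [← hqfix]
    simp [Matrix.mulVec, dotProduct, Matrix.transpose_apply]
  -- Perron argument: q is constant
  obtain ⟨imax, -, himax⟩ :=
    Finset.exists_max_image (univ : Finset (Fin n)) q ⟨i0, Finset.mem_univ i0⟩
  have himax' : ∀ j, q j ≤ q imax := fun j => himax j (Finset.mem_univ j)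
  have hstep : ∀ i j, q i = q imax → 0 < W j i → q j = q imax := by
    intro i j hqi hWji
    have hsum0 : ∑ m, W m i * (q imax - q m) = 0 := by
      have e : ∑ m, W m i * (q imax - q m)
          = (∑ m, W m i) * q imax - ∑ m, W m i * q m := by
        rw [Finset.sum_mul, ← Finset.sum_sub_distrib]
        exact Finset.sum_congr rfl fun m _ => by ring
      rw [e, hWcol i, one_mul, ← hqW i, hqi, sub_self]
    have h0 := (Finset.sum_eq_zero_iff_of_nonneg
      (fun m _ => mul_nonneg (hWnn m i) (sub_nonneg.mpr (himax' m)))).mp hsum0 j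
      (Finset.mem_univ j)
    rcases mul_eq_zero.mp h0 with hc | hc
    · exact absurd hc (ne_of_gt hWji)
    · exact (sub_eq_zero.mp hc).symm
  have hkstep : ∀ k : ℕ, ∀ i j, q i = q imax → 0 < (W ^ k) j i → q j = q imax := by
    intro k
    induction k with
    | zero =>
      intro i j hqi hpos
      rw [pow_zero] at hpos
      by_cases hij : j = i
      · rw [hij]; exact hqi
      · rw [Matrix.one_apply_ne hij] at hpos
        exact absurd hpos (lt_irrefl 0)
    | succ k ih =>
      intro i j hqi hpos
      rw [pow_succ', Matrix.mul_apply] at hpos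
      have hex : ∃ m, 0 < W j m * (W ^ k) m i := by
        by_contra hc
        push_neg at hc
        have : ∑ m, W j m * (W ^ k) m i ≤ 0 := Finset.sum_nonpos fun m _ => hc m
        linarith
      obtain ⟨m, hm⟩ := hex
      have hWjm : 0 < W j m := by
        rcases mul_pos_iff.mp hm with ⟨ha, _⟩ | ⟨_, hb⟩
        · exact ha
        · exact absurd hb (not_lt.mpr (hWpownn k m i))
      have hWk : 0 < (W ^ k) m i := by
        rcases mul_pos_iff.mp hm with ⟨_, hb⟩ | ⟨ha, _⟩
        · exact hb
        · exact absurd ha (not_lt.mpr (hWnn j m))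
      exact hstep m j (ih i m hqi hWk) hWjm
  have hconst : ∀ j, q j = q imax := fun j => by
    obtain ⟨k, hk⟩ := hirr j imax
    exact hkstep k imax j rfl hk
  -- q sums to zero, hence q = 0
  have hsumv : ∑ i, v i = 0 := by
    simp only [hv]
    rw [Finset.sum_sub_distrib, hp1, hs1, sub_self]
  have hcolsum : ∀ x : Fin n → ℝ, ∑ i, L.mulVec x i = 0 := by
    intro x
    have hLcol : ∀ j, ∑ i, L i j = 0 := by
      intro j
      rw [hLdef]
      simp [Matrix.sub_apply, Finset.sum_sub_distrib, hWcol j, Matrix.one_apply]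
    calc ∑ i, L.mulVec x i = ∑ i, ∑ j, L i j * x j := by
          simp [Matrix.mulVec, dotProduct]
      _ = ∑ j, (∑ i, L i j) * x j := by
          rw [Finset.sum_comm]
          exact Finset.sum_congr rfl fun j _ => (Finset.sum_mul _ _ _).symm
      _ = 0 := by simp [hLcol]
  have hsumq : ∑ i, q i = 0 := by
    rw [hqdef]
    simp only [Pi.sub_apply]
    rw [Finset.sum_sub_distrib, hsumv, ← Matrix.mulVec_mulVec, hcolsum, sub_self]
  have hqmax0 : q imax = 0 := by
    have hsum : ∑ i, q i = (n : ℝ) * q imax := by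
      rw [Finset.sum_congr rfl fun i _ => hconst i, Finset.sum_const, Finset.card_univ,
        Fintype.card_fin, nsmul_eq_mul]
    rw [hsumq] at hsum
    have hn' : (0:ℝ) < n := by exact_mod_cast hn
    rcases mul_eq_zero.mp hsum.symm with hc | hc
    · exact absurd hc (ne_of_gt hn')
    · exact hc
  have hq0 : ∀ i, q i = 0 := fun i => by rw [hconst i, hqmax0]
  have hproj : L.mulVec zp = v := by
    funext i
    have := hq0 i
    rw [hqdef] at this
    simp only [Pi.sub_apply] at this
    rw [hzp, Matrix.mulVec_mulVec]
    linarith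
  -- relate the mixing quantity to v
  have hlazys : ∀ k : ℕ, (lazyWalk W ^ k).mulVec s = s := by
    intro k
    induction k with
    | zero => rw [pow_zero, Matrix.one_mulVec]
    | succ k ih =>
      rw [pow_succ', ← Matrix.mulVec_mulVec, ih]
      rw [lazyWalk, Matrix.smul_mulVec, Matrix.add_mulVec, Matrix.one_mulVec, hstat]
      funext i
      simp only [Pi.smul_apply, Pi.add_apply, smul_eq_mul]
      ring
  set y : Fin n → ℝ := (lazyWalk W ^ T).mulVec v with hy
  have hgt2 : 1/2 < ∑ i, |y i| := by
    have hvs : p = v + s := by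
      funext i
      simp only [hv, Pi.add_apply]
      ring
    have hsplit : (lazyWalk W ^ T).mulVec p
        = (lazyWalk W ^ T).mulVec v + (lazyWalk W ^ T).mulVec s := by
      rw [hvs, Matrix.mulVec_add]
    have he : ∀ i, ((lazyWalk W ^ T).mulVec p) i - s i = y i := by
      intro i
      rw [hy, hsplit, hlazys]
      simp
    calc (1:ℝ)/2 < ∑ i, |((lazyWalk W ^ T).mulVec p) i - s i| := hgt
      _ = ∑ i, |y i| := Finset.sum_congr rfl fun i _ => by rw [he i]
  set C : ℝ := (T.choose (T/2) : ℝ) with hC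
  -- the key identity and estimate
  have hstep1 : y = ((lazyWalk W ^ T) * L).mulVec zp := by
    rw [← Matrix.mulVec_mulVec, hproj]
  have hyid : y = ((1:ℝ)/2)^T • ∑ i ∈ Finset.range (T+2), dcoef T i • (W ^ i).mulVec zp := by
    rw [hstep1, hLdef, lazy_pow_mul_L W T, Matrix.smul_mulVec, sum_mulVec_distrib]
    congr 1
    exact Finset.sum_congr rfl fun i _ => Matrix.smul_mulVec _ _ _
  have hzp2 : ∑ j, |zp j| ≤ 2 * K := by
    have hzb := l1_op_bound Lp v K hKcol
    have hv2 : ∑ j, |v j| ≤ 2 := by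
      calc ∑ j, |v j| ≤ ∑ j, (p j + s j) := Finset.sum_le_sum fun j _ => by
            have hle : |p j - s j| ≤ |p j| + |s j| := abs_sub (p j) (s j)
            rwa [abs_of_nonneg (hp0 j), abs_of_nonneg (hs j)] at hle
        _ = 2 := by rw [Finset.sum_add_distrib, hp1, hs1]; norm_num
    calc ∑ j, |zp j| ≤ K * ∑ j, |v j| := hzb
      _ ≤ K * 2 := mul_le_mul_of_nonneg_left hv2 hK0
      _ = 2 * K := mul_comm _ _
  have hhalfpos : (0:ℝ) ≤ ((1:ℝ)/2)^T := by positivity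
  have hC0 : (0:ℝ) ≤ C := by rw [hC]; positivity
  have hub : ∑ i, |y i| ≤ ((1:ℝ)/2)^T * (2*C) * (2*K) := by
    calc ∑ k, |y k|
        = ((1:ℝ)/2)^T * ∑ k, |(∑ i ∈ Finset.range (T+2), dcoef T i • (W ^ i).mulVec zp) k| := by
          rw [hyid, Finset.mul_sum]
          refine Finset.sum_congr rfl fun k _ => ?_
          rw [Pi.smul_apply, smul_eq_mul, abs_mul, abs_of_nonneg hhalfpos]
      _ ≤ ((1:ℝ)/2)^T * ((∑ i ∈ Finset.range (T+2), |dcoef T i|) * ∑ j, |zp j|) := by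
          refine mul_le_mul_of_nonneg_left ?_ hhalfpos
          calc ∑ k, |(∑ i ∈ Finset.range (T+2), dcoef T i • (W ^ i).mulVec zp) k|
              = ∑ k, |∑ i ∈ Finset.range (T+2), dcoef T i * (W ^ i).mulVec zp k| := by
                refine Finset.sum_congr rfl fun k _ => ?_
                congr 1
                rw [Finset.sum_apply]
                rfl
            _ ≤ ∑ k, ∑ i ∈ Finset.range (T+2), |dcoef T i * (W ^ i).mulVec zp k| :=
                Finset.sum_le_sum fun k _ => Finset.abs_sum_le_sum_abs _ _
            _ = ∑ i ∈ Finset.range (T+2), |dcoef T i| * ∑ k, |(W ^ i).mulVec zp k| := by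
                rw [Finset.sum_comm]
                refine Finset.sum_congr rfl fun i _ => ?_
                rw [Finset.mul_sum]
                exact Finset.sum_congr rfl fun k _ => abs_mul _ _
            _ ≤ ∑ i ∈ Finset.range (T+2), |dcoef T i| * ∑ j, |zp j| :=
                Finset.sum_le_sum fun i _ =>
                  mul_le_mul_of_nonneg_left (hcontr i zp) (abs_nonneg _)
            _ = (∑ i ∈ Finset.range (T+2), |dcoef T i|) * ∑ j, |zp j| :=
                (Finset.sum_mul _ _ _).symm
      _ = ((1:ℝ)/2)^T * ((2*C) * ∑ j, |zp j|) := by rw [abs_dcoef_sum T, hC]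
      _ ≤ ((1:ℝ)/2)^T * ((2*C) * (2*K)) := by
          refine mul_le_mul_of_nonneg_left (mul_le_mul_of_nonneg_left hzp2 ?_) hhalfpos
          linarith
      _ = ((1:ℝ)/2)^T * (2*C) * (2*K) := by ring
  -- numeric endgame
  have hCpos : (0:ℝ) < C := by
    rw [hC]
    exact_mod_cast Nat.choose_pos (Nat.div_le_self T 2)
  have hmain : (1:ℝ)/2 < ((1:ℝ)/2)^T * (2*C) * (2*K) := lt_of_lt_of_le hgt2 hub
  have h2T : (0:ℝ) < 2^T := by positivity
  have h8 : (2:ℝ)^T < 8*(C*K) := by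
    have hhalf : ((1:ℝ)/2)^T = ((2:ℝ)^T)⁻¹ := by
      rw [div_pow, one_pow, one_div]
    rw [hhalf] at hmain
    have hmul := mul_lt_mul_of_pos_right hmain h2T
    have e : ((2:ℝ)^T)⁻¹ * (2*C) * (2*K) * 2^T = 4*(C*K) := by
      field_simp
      ring
    rw [e] at hmul
    linarith
  have h4T : (4:ℝ)^T < 64*(C*K)^2 := by
    have hsq := mul_self_lt_mul_self (le_of_lt h2T) h8
    have e : (4:ℝ)^T = 2^T * 2^T := by rw [← mul_pow]; norm_num
    rw [e]
    nlinarith [hsq]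
  have hcast : C^2 * (3*(T:ℝ)+2) ≤ 2*4^T := by
    have hb := choose_sq_bound T
    rw [hC]
    exact_mod_cast hb
  have hTK : 3*(T:ℝ)+2 < 128*K^2 := by
    have hC2 : (0:ℝ) < C^2 := by positivity
    have hlt : C^2 * (3*(T:ℝ)+2) < C^2 * (128*K^2) := by nlinarith [hcast, h4T]
    exact (mul_lt_mul_iff_right₀ hC2).mp hlt
  have hfinal : ((tmix : ℕ) : ℝ) ≤ (16*K)^2 := by
    rw [htmix]
    push_cast
    nlinarith [hTK, hK0, Nat.cast_nonneg (α := ℝ) T]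
  calc Real.sqrt tmix ≤ Real.sqrt ((16*K)^2) := Real.sqrt_le_sqrt hfinal
    _ = 16*K := Real.sqrt_sq (by positivity)
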